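/- Let K ⊂ ℝ^d be a self-similar set satisfying the open set condition, and suppose K is locally k-flat, witnessed by a closed cube C with C°∩K ≠ ∅ and C∩K similar to [0,1]^k × P. Then there exists a similarity ψ of ℝ^d such that K ⊆ ψ(C ∩ K). -/
import Mathlib


open Metric Set

open Metric Set

/-- A similarity between metric spaces: a map scaling all distances by a fixed
positive ratio. -/
def IsSimilarity {α β : Type*} [MetricSpace α] [MetricSpace β] (f : α → β) : Prop :=
  ∃ r : ℝ, 0 < r ∧ ∀ x y, dist (f x) (f y) = r * dist x y

/-- Two sets (in possibly different metric spaces) are similar if a similarity maps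
one onto the other. -/
def SimilarSets {α β : Type*} [MetricSpace α] [MetricSpace β]
    (A : Set α) (B : Set β) : Prop :=
  ∃ f : α → β, IsSimilarity f ∧ f '' A = B

/-- The unit cube `[0,1]^d` in `ℝ^d`. -/
def unitCube (d : ℕ) : Set (EuclideanSpace ℝ (Fin d)) :=
  {x | ∀ i, x i ∈ Set.Icc (0 : ℝ) 1}

/-- A closed cube in `ℝ^d`: a similar copy of the unit cube. -/
def IsClosedCube {d : ℕ} (C : Set (EuclideanSpace ℝ (Fin d))) : Prop :=
  SimilarSets (unitCube d) C

/-- The product set `[0,1]^k × P ⊆ ℝ^k × ℝ^m`, with the Euclidean (L²) product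
metric. -/
def cubeProd (k m : ℕ) (P : Set (EuclideanSpace ℝ (Fin m))) :
    Set (WithLp 2 (EuclideanSpace ℝ (Fin k) × EuclideanSpace ℝ (Fin m))) :=
  (WithLp.equiv 2 (EuclideanSpace ℝ (Fin k) × EuclideanSpace ℝ (Fin m))).symm ''
    (unitCube k ×ˢ P)

/-- `A` is a `k`-flat set in `ℝ^d`: it is similar to `[0,1]^k × P` for some
`P ⊆ ℝ^{d−k}`. -/
def IsKFlatSet (d k : ℕ) (A : Set (EuclideanSpace ℝ (Fin d))) : Prop :=
  ∃ P : Set (EuclideanSpace ℝ (Fin (d - k))), SimilarSets A (cubeProd k (d - k) P)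

/-- Local k-flatness of a set `K ⊆ ℝ^d`. -/
def LocallyKFlat (d k : ℕ) (K : Set (EuclideanSpace ℝ (Fin d))) : Prop :=
  ∀ x ∈ K, ∀ ε > 0, ∃ C : Set (EuclideanSpace ℝ (Fin d)),
    IsClosedCube C ∧ C ⊆ closedBall x ε ∧ (interior C ∩ K).Nonempty ∧
    IsKFlatSet d k (C ∩ K)

/-- A similarity of `ℝ^d` onto itself is surjective. -/
lemma stmt9_sim_surj {d : ℕ} {f : EuclideanSpace ℝ (Fin d) → EuclideanSpace ℝ (Fin d)}
    {r : ℝ} (hr : 0 < r) (hf : ∀ x y, dist (f x) (f y) = r * dist x y) :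
    Function.Surjective f := by
  set h : EuclideanSpace ℝ (Fin d) → EuclideanSpace ℝ (Fin d) := fun x => r⁻¹ • f x with hh
  have hiso : Isometry h := by
    refine Isometry.of_dist_eq fun x y => ?_
    simp only [hh, dist_smul₀, hf, Real.norm_eq_abs, abs_of_pos (inv_pos.mpr hr)]
    field_simp
  let A := hiso.affineIsometryOfStrictConvexSpace
  have hA : ⇑A = h := Isometry.coe_affineIsometryOfStrictConvexSpace hiso
  have hlin : Function.Surjective A.linearIsometry.toLinearMap := by
    rw [← LinearMap.injective_iff_surjective]
    exact A.linearIsometry.injective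
  have hsurj : Function.Surjective h := by
    intro y
    obtain ⟨x, hx⟩ := hlin (y - h 0)
    refine ⟨x, ?_⟩
    have := A.toAffineMap.decomp
    have hx' : h x = A.linearIsometry x + h 0 := by
      have := congrFun this x
      simpa [hA] using this
    rw [hx']
    rw [show (A.linearIsometry x : EuclideanSpace ℝ (Fin d)) = y - h 0 from hx]
    abel
  intro y
  obtain ⟨x, hx⟩ := hsurj (r⁻¹ • y)
  exact ⟨x, by have : r • h x = r • (r⁻¹ • y) := by rw [hx]
               simpa [hh, smul_smul, mul_inv_cancel₀ hr.ne'] using this⟩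

/-- If a self-similar set `K` satisfying the open set condition is locally
`k`-flat, witnessed by a cube `C`, then there is a similarity `ψ` with
`K ⊆ ψ(C ∩ K)`. -/
theorem stmt9 {d N k : ℕ} (hN : 2 ≤ N) (hk : 1 ≤ k) (hkd : k ≤ d)
    (φ : Fin N → EuclideanSpace ℝ (Fin d) → EuclideanSpace ℝ (Fin d))
    (hφ : ∀ i, ∃ r : ℝ, 0 < r ∧ r < 1 ∧
      ∀ x y, dist (φ i x) (φ i y) = r * dist x y)
    (K O : Set (EuclideanSpace ℝ (Fin d)))
    (hK : IsCompact K) (hKne : K.Nonempty) (hattr : K = ⋃ i, φ i '' K)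
    (hOopen : IsOpen O) (hOne : O.Nonempty)
    (hOfeas : (⋃ i, φ i '' O) ⊆ O)
    (hOdisj : Pairwise fun i j => Disjoint (φ i '' O) (φ j '' O))
    (hLF : LocallyKFlat d k K)
    (C : Set (EuclideanSpace ℝ (Fin d)))
    (hC : IsClosedCube C) (hCint : (interior C ∩ K).Nonempty)
    (hflat : IsKFlatSet d k (C ∩ K)) :
    ∃ ψ : EuclideanSpace ℝ (Fin d) → EuclideanSpace ℝ (Fin d),
      IsSimilarity ψ ∧ K ⊆ ψ '' (C ∩ K) := by
  classical
  obtain ⟨x, hxC, hxK⟩ := hCint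
  obtain ⟨ε, hε, hball⟩ := Metric.isOpen_iff.mp isOpen_interior x hxC
  -- contraction ratios
  choose r hr0 hr1 hrd using hφ
  haveI : Nonempty (Fin N) := ⟨⟨0, by omega⟩⟩
  set ρ : ℝ := Finset.univ.sup' Finset.univ_nonempty r with hρdef
  have hρ0 : 0 < ρ := lt_of_lt_of_le (hr0 ⟨0, by omega⟩)
    (Finset.le_sup' r (Finset.mem_univ _))
  have hρi : ∀ i, r i ≤ ρ := fun i => Finset.le_sup' r (Finset.mem_univ i)
  have hρ1 : ρ < 1 := by
    rw [hρdef, Finset.sup'_lt_iff]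
    exact fun i _ => hr1 i
  -- iterated contractions shrinking around x
  have key : ∀ n : ℕ, ∃ f : EuclideanSpace ℝ (Fin d) → EuclideanSpace ℝ (Fin d),
      ∃ s : ℝ, 0 < s ∧ s ≤ ρ ^ n ∧ (∀ a b, dist (f a) (f b) = s * dist a b) ∧
        x ∈ f '' K ∧ f '' K ⊆ K := by
    intro n
    induction n with
    | zero =>
      exact ⟨id, 1, one_pos, by simp, by simp, ⟨x, hxK, rfl⟩, by simp⟩
    | succ n ih =>
      obtain ⟨f, s, hs0, hsn, hsd, ⟨y, hyK, hfy⟩, hfK⟩ := ih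
      have hy' : y ∈ ⋃ i, φ i '' K := hattr ▸ hyK
      obtain ⟨_, ⟨i, rfl⟩, z, hzK, hz⟩ := hy'
      refine ⟨f ∘ φ i, s * r i, mul_pos hs0 (hr0 i), ?_, ?_, ⟨z, hzK, ?_⟩, ?_⟩
      · rw [pow_succ]
        exact mul_le_mul hsn (hρi i) (hr0 i).le (pow_nonneg hρ0.le n)
      · intro a b; simp [hsd, hrd, mul_assoc]
      · simp [hz, hfy]
      · calc (f ∘ φ i) '' K = f '' (φ i '' K) := by rw [Set.image_comp]
          _ ⊆ f '' K := Set.image_mono (by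
              intro w hw
              rw [hattr]
              exact Set.mem_iUnion.mpr ⟨i, hw⟩)
          _ ⊆ K := hfK
  -- choose n so the image fits in the ball
  have hD0 : (0:ℝ) < Metric.diam K + 1 := by positivity
  obtain ⟨n, hn⟩ := exists_pow_lt_of_lt_one (div_pos hε hD0) hρ1
  obtain ⟨f, s, hs0, hsn, hsd, ⟨y, hyK, hfy⟩, hfK⟩ := key n
  have hsub : f '' K ⊆ C ∩ K := by
    rintro _ ⟨a, haK, rfl⟩
    constructor
    · apply interior_subset
      apply hball
      rw [mem_ball, ← hfy, hsd]
      have h1 : dist a y ≤ Metric.diam K :=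
        Metric.dist_le_diam_of_mem hK.isBounded haK hyK
      calc s * dist a y ≤ ρ ^ n * (Metric.diam K + 1) := by
            apply mul_le_mul hsn _ dist_nonneg (pow_nonneg hρ0.le n)
            linarith
        _ < ε / (Metric.diam K + 1) * (Metric.diam K + 1) := by
            exact mul_lt_mul_of_pos_right hn hD0
        _ = ε := div_mul_cancel₀ ε hD0.ne'
    · exact hfK ⟨a, haK, rfl⟩
  -- f is bijective; its inverse is the required similarity
  have hfinj : Function.Injective f := fun a b hab => by
    have := hsd a b
    rw [hab, dist_self] at this
    exact dist_eq_zero.mp ((mul_eq_zero.mp this.symm).resolve_left hs0.ne')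
  have hfsurj := stmt9_sim_surj hs0 hsd
  set g := Function.invFun f with hg
  have hgf : ∀ a, g (f a) = a := fun a => Function.leftInverse_invFun hfinj a
  have hfg : ∀ b, f (g b) = b := fun b => Function.rightInverse_invFun hfsurj b
  refine ⟨g, ⟨s⁻¹, inv_pos.mpr hs0, fun u v => ?_⟩, fun a haK => ?_⟩
  · have : dist (f (g u)) (f (g v)) = s * dist (g u) (g v) := hsd _ _
    rw [hfg, hfg] at this
    rw [this]
    field_simp
  · exact ⟨f a, hsub ⟨a, haK, rfl⟩, hgf a⟩
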